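/- Let 𝒪 be a factorial ring, k ≥ 2 an integer, and f_1, …, f_k ∈ 𝒪 elements such that each f_i is not a unit and f_i, f_j are relatively prime for all i ≠ j. Then the 𝒪-module 𝒪/(f_1, f_2 f_3 ⋯ f_k) admits a filtration by 𝒪-submodules 0 = M_0 ⊆ M_1 ⊆ ⋯ ⊆ M_{k−1} = 𝒪/(f_1, f_2 ⋯ f_k) whose successive quotients M_j / M_{j−1} (j = 1, …, k−1) are, in some order, isomorphic to the modules 𝒪/(f_1, f_2), 𝒪/(f_1, f_3), …, 𝒪/(f_1, f_k). -/

import Mathlib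

open Ideal

set_option synthInstance.maxHeartbeats 1000000 in
set_option maxHeartbeats 2000000 in
/-- Lemma 1.6: for `𝒪` a factorial ring and `f₁, …, f_k` pairwise relatively prime
non-units (here `0`-indexed, so the paper's `f₁` is `f 0`), the `𝒪`-module
`𝒪/(f₁, f₂f₃⋯f_k)` admits a filtration `0 = M₀ ⊆ M₁ ⊆ ⋯ ⊆ M_{k-1} = 𝒪/(f₁, f₂⋯f_k)`
whose successive quotients are, in some order, the modules `𝒪/(f₁, fⱼ)`, `j = 2, …, k`. -/
theorem quotient_filtration_graded_pieces {O : Type*} [CommRing O] [IsDomain O]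
    [UniqueFactorizationMonoid O] (k : ℕ) (hk : 2 ≤ k) (f : Fin k → O)
    (hunit : ∀ i, ¬ IsUnit (f i))
    (hrel : ∀ i j, i ≠ j → IsRelPrime (f i) (f j)) :
    ∃ M : ℕ → Submodule O
        (O ⧸ Ideal.span {f ⟨0, by omega⟩, ∏ j ∈ Finset.univ.filter fun j : Fin k => j.val ≠ 0, f j}),
      Monotone M ∧ M 0 = ⊥ ∧ M (k - 1) = ⊤ ∧
      ∃ e : Equiv.Perm (Fin (k - 1)),
        ∀ i : Fin (k - 1),
          Nonempty ((M (i.val + 1) ⧸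
              Submodule.comap (M (i.val + 1)).subtype (M i.val)) ≃ₗ[O]
            O ⧸ Ideal.span {f ⟨0, by omega⟩, f ⟨(e i).val + 1, by have := (e i).isLt; omega⟩}) := by
  classical
  set f0 : O := f ⟨0, by omega⟩ with hf0
  set P : O := ∏ j ∈ Finset.univ.filter fun j : Fin k => j.val ≠ 0, f j with hPdef
  set I : Ideal O := Ideal.span {f0, P} with hIdef
  set p : ℕ → O := fun m => ∏ j ∈ Finset.univ.filter fun j : Fin k => m < j.val, f j with hpdef
  have hp0 : p 0 = P := by
    simp only [hpdef, hPdef]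
    exact Finset.prod_congr (by ext j; simp [Nat.pos_iff_ne_zero]) fun _ _ => rfl
  -- divisibility between the partial products
  have hdvd : ∀ {m n : ℕ}, m ≤ n → p n ∣ p m := by
    intro m n hmn
    exact Finset.prod_dvd_prod_of_subset _ _ _ (by
      intro j hj
      simp only [Finset.mem_filter, Finset.mem_univ, true_and] at hj ⊢
      omega)
  -- peeling off one factor
  have hfac : ∀ m : ℕ, ∀ hm : m + 1 < k, p m = f ⟨m + 1, hm⟩ * p (m + 1) := by
    intro m hm
    have hset : (Finset.univ.filter fun j : Fin k => m < j.val)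
        = insert ⟨m + 1, hm⟩ (Finset.univ.filter fun j : Fin k => m + 1 < j.val) := by
      ext j
      simp only [Finset.mem_filter, Finset.mem_univ, true_and, Finset.mem_insert,
        Fin.ext_iff]
      omega
    simp only [hpdef]
    rw [hset, Finset.prod_insert (by simp)]
  -- coprimality of f0 with each partial product
  have hcop : ∀ m : ℕ, IsRelPrime f0 (p m) := by
    intro m
    refine IsRelPrime.prod_right fun j hj => ?_
    simp only [Finset.mem_filter, Finset.mem_univ, true_and] at hj
    exact hrel _ _ (by intro h; rw [← h] at hj; simp at hj)
  -- the filtration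
  refine ⟨fun m => Submodule.map I.mkQ (Ideal.span {p m} : Ideal O), ?_, ?_, ?_, ?_⟩
  · intro m n hmn
    exact Submodule.map_mono (Ideal.span_singleton_le_span_singleton.mpr (hdvd hmn))
  · rw [eq_bot_iff]
    rintro x ⟨y, hy, rfl⟩
    rw [SetLike.mem_coe, Ideal.mem_span_singleton] at hy
    have hyI : y ∈ I := by
      refine Ideal.mem_of_dvd _ ?_ (Ideal.subset_span (Set.mem_insert_of_mem _ rfl))
      rwa [← hp0]
    rw [Submodule.mem_bot]
    rwa [Submodule.mkQ_apply, Submodule.Quotient.mk_eq_zero]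
  · have h1 : p (k - 1) = 1 := by
      simp only [hpdef]
      rw [Finset.prod_eq_one]
      intro j hj
      simp only [Finset.mem_filter, Finset.mem_univ, true_and] at hj
      omega
    show Submodule.map I.mkQ (Ideal.span {p (k - 1)} : Ideal O) = ⊤
    rw [h1, Ideal.span_singleton_one, Submodule.map_top, Submodule.range_mkQ]
  · refine ⟨Equiv.refl _, fun i => ?_⟩
    have him : i.val + 1 < k := by have := i.isLt; omega
    set m : ℕ := i.val with hm
    set q : O := p (m + 1) with hq
    set f' : O := f ⟨m + 1, him⟩ with hf'
    have hpm : p m = f' * q := hfac m him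
    -- the linear map O → M (m+1), x ↦ class of x * q
    set g0 : O →ₗ[O] O ⧸ I := I.mkQ.comp (LinearMap.toSpanSingleton O O q) with hg0
    have hg0apply : ∀ x : O, g0 x = I.mkQ (x * q) := by
      intro x; simp [hg0, LinearMap.toSpanSingleton, smul_eq_mul]
    have hg0mem : ∀ x : O, g0 x ∈ Submodule.map I.mkQ (Ideal.span {p (m + 1)} : Ideal O) := by
      intro x
      rw [hg0apply]
      exact Submodule.mem_map_of_mem
        (Ideal.mem_span_singleton.mpr (Dvd.intro_left x rfl))
    set A := Submodule.map I.mkQ (Ideal.span {p (m + 1)} : Ideal O) with hA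
    set B := Submodule.comap A.subtype (Submodule.map I.mkQ (Ideal.span {p m} : Ideal O)) with hB
    set g : O →ₗ[O] A := LinearMap.codRestrict A g0 hg0mem with hg
    set ψ : O →ₗ[O] (A ⧸ B) := B.mkQ.comp g with hψ
    -- surjectivity
    have hgsurj : Function.Surjective g := by
      rintro ⟨a, y, hy, rfl⟩
      rw [SetLike.mem_coe, Ideal.mem_span_singleton'] at hy
      obtain ⟨x, rfl⟩ := hy
      exact ⟨x, Subtype.ext (by simp [hg, hg0apply]; rfl)⟩
    have hsurj : Function.Surjective ψ := (Submodule.mkQ_surjective B).comp hgsurj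
    -- membership in the image of the quotient map
    have hmemmap : ∀ (y : O) (S : Ideal O),
        I.mkQ y ∈ Submodule.map I.mkQ S ↔ y ∈ S ⊔ I := by
      intro y S
      rw [← Submodule.mem_comap, Submodule.comap_map_eq, Submodule.ker_mkQ]
    -- kernel computation
    have hker : LinearMap.ker ψ = (Ideal.span {f0, f'} : Ideal O) := by
      ext x
      rw [LinearMap.mem_ker]
      have h1 : ψ x = 0 ↔ g0 x ∈ Submodule.map I.mkQ (Ideal.span {p m} : Ideal O) := by
        rw [hψ, LinearMap.comp_apply, Submodule.mkQ_apply, Submodule.Quotient.mk_eq_zero]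
        exact Iff.rfl
      rw [h1, hg0apply, hmemmap]
      constructor
      · intro h
        obtain ⟨y, hy, z, hz, hyz⟩ := Submodule.mem_sup.mp h
        rw [Ideal.mem_span_singleton] at hy
        obtain ⟨b, rfl⟩ := hy
        rw [hIdef, Ideal.mem_span_pair] at hz
        obtain ⟨u, v, rfl⟩ := hz
        obtain ⟨c, hc⟩ : p m ∣ P := by rw [← hp0]; exact hdvd (Nat.zero_le m)
        have key : (x - f' * (b + v * c)) * q = f0 * u := by
          have := hyz
          rw [hc, hpm] at this
          ring_nf
          ring_nf at this
          linear_combination -this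
        have hdvd0 : f0 ∣ x - f' * (b + v * c) :=
          (hcop (m + 1)).dvd_of_dvd_mul_right ⟨u, key⟩
        obtain ⟨w, hw⟩ := hdvd0
        rw [Ideal.mem_span_pair]
        exact ⟨w, b + v * c, by linear_combination -hw⟩
      · intro h
        rw [Ideal.mem_span_pair] at h
        obtain ⟨u, v, rfl⟩ := h
        refine Submodule.mem_sup.mpr ⟨v * p m, ?_, u * f0 * q, ?_, by rw [hpm]; ring⟩
        · exact Ideal.mul_mem_left _ _ (Ideal.subset_span rfl)
        · exact Ideal.mul_mem_right _ _ (Ideal.mul_mem_left _ _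
            (Ideal.subset_span (by simp)))
    exact ⟨(LinearMap.quotKerEquivOfSurjective ψ hsurj).symm.trans
      (Submodule.quotEquivOfEq _ _ hker)⟩
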